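/- Let (A ⋊_α G, i_A, i_G) be the full crossed product of a C*-dynamical system (A, G, α) with G a discrete group, and let I, J be α-invariant closed two-sided ideals of A. Then (I ⋊_α G) + (J ⋊_α G) = (I + J) ⋊_α G and (I ⋊_α G) ∩ (J ⋊_α G) = (I ∩ J) ⋊_α G as ideals of A ⋊_α G. -/

import Mathlib

set_option maxHeartbeats 1000000
set_option linter.unusedSectionVars false


/- An abstract model of the full crossed product `A ⋊_α G` of a C*-dynamical
system `(A, G, α)` with `G` discrete: a C*-algebra `C` together with the
generator map `gen a g = i_A(a) i_G(g)`, subject to the covariance relations,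
density of the span of the generators, and the universal property. -/

universe u v w

structure CrossedProduct (A : Type v) [NonUnitalNormedRing A] [StarRing A]
    [CStarRing A] [NormedSpace ℂ A] [CompleteSpace A]
    (G : Type w) [Group G] (α : G → (A ≃⋆ₐ[ℂ] A)) : Type (max (u + 1) v w) where
  C : Type u
  [nring : NonUnitalNormedRing C]
  [nstar : StarRing C]
  [ncstar : CStarRing C]
  [nspace : NormedSpace ℂ C]
  [ncomplete : CompleteSpace C]
  [nscomm : SMulCommClass ℂ C C]
  [ntower : IsScalarTower ℂ C C]
  [nstarmod : StarModule ℂ C]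
  gen : A → G → C
  gen_add : ∀ (a b : A) (g : G), gen (a + b) g = gen a g + gen b g
  gen_smul : ∀ (c : ℂ) (a : A) (g : G), gen (c • a) g = c • gen a g
  gen_mul : ∀ (a b : A) (g h : G), gen a g * gen b h = gen (a * (α g) b) (g * h)
  gen_star : ∀ (a : A) (g : G), star (gen a g) = gen ((α g⁻¹) (star a)) g⁻¹
  spanning : (Submodule.span ℂ
    (Set.range fun p : A × G => gen p.1 p.2)).topologicalClosure = ⊤
  universal : ∀ (D : Type u) [NonUnitalNormedRing D] [StarRing D] [CStarRing D]
    [NormedSpace ℂ D] [CompleteSpace D] [SMulCommClass ℂ D D] [IsScalarTower ℂ D D]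
    [StarModule ℂ D] (genD : A → G → D),
    (∀ (a b : A) (g : G), genD (a + b) g = genD a g + genD b g) →
    (∀ (c : ℂ) (a : A) (g : G), genD (c • a) g = c • genD a g) →
    (∀ (a b : A) (g h : G), genD a g * genD b h = genD (a * (α g) b) (g * h)) →
    (∀ (a : A) (g : G), star (genD a g) = genD ((α g⁻¹) (star a)) g⁻¹) →
    ∃ Φ : C →⋆ₙₐ[ℂ] D, ∀ (a : A) (g : G), Φ (gen a g) = genD a g

attribute [instance] CrossedProduct.nring CrossedProduct.nstar CrossedProduct.ncstar
  CrossedProduct.nspace CrossedProduct.ncomplete CrossedProduct.nscomm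
  CrossedProduct.ntower CrossedProduct.nstarmod

variable {A : Type v} [NonUnitalNormedRing A] [StarRing A] [CStarRing A]
  [NormedSpace ℂ A] [CompleteSpace A]
  {G : Type w} [Group G]

/-- The ideal `K ⋊_α G`: the closed span of `{i_A(k) i_G(g) : k ∈ K, g ∈ G}`. -/
noncomputable def idealCP {α : G → (A ≃⋆ₐ[ℂ] A)} (E : CrossedProduct.{u} A G α)
    (K : TwoSidedIdeal A) : Submodule ℂ E.C :=
  (Submodule.span ℂ {x : E.C | ∃ a ∈ K, ∃ g : G, x = E.gen a g}).topologicalClosure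


section CStar
variable {C : Type*} [NonUnitalNormedRing C] [StarRing C] [CStarRing C]
  [NormedSpace ℂ C] [CompleteSpace C] [SMulCommClass ℂ C C] [IsScalarTower ℂ C C] [StarModule ℂ C]

noncomputable local instance : NonUnitalCStarAlgebra C where

/-- Single-element approximate unit in a non-unital C*-algebra. -/
lemma cstar_approx (m : C) {ε : ℝ} (hε : 0 < ε) :
    ∃ e : C, (∃ r : ℂ, ∃ c : C, e = r • (m * star m) + (m * star m) * c) ∧
      ‖m - e * m‖ ≤ ε ∧ ∀ z : C, ‖z - e * z‖ ≤ ‖z‖ := by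
  set δ : ℝ := ε ^ 2 with hδdef
  have hδ : 0 < δ := by positivity
  set a : C := m * star m with ha
  set A' : Unitization ℂ C := (a : Unitization ℂ C) with hA'def
  set M' : Unitization ℂ C := (m : Unitization ℂ C) with hM'def
  have hMA : A' = M' * star M' := by
    simp [hA'def, hM'def, ha, Unitization.inr_mul]
  have hA'sa : IsSelfAdjoint A' := by rw [hMA]; exact IsSelfAdjoint.mul_star_self M'
  have hσ : ∀ t ∈ spectrum ℝ A', 0 ≤ t := by
    intro t ht
    refine spectrum_star_mul_self_nonneg (b := star M') t ?_
    rwa [star_star, ← hMA]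
  set h : ℝ → ℝ := fun t => (max t 0 + δ)⁻¹ with hh
  have hpos : ∀ t : ℝ, 0 < max t 0 + δ := fun t => by positivity
  have hcont : Continuous h := Continuous.inv₀ (by fun_prop) (fun t => (hpos t).ne')
  set u : Unitization ℂ C := cfc h A' with hu
  set E' : Unitization ℂ C := A' * u with hE'
  -- membership data
  have hEfst : E'.fst = 0 := by
    rw [hE', Unitization.fst_mul, hA'def, Unitization.fst_inr, zero_mul]
  set e : C := E'.snd with he
  have hEeq : (e : Unitization ℂ C) = E' := by
    conv_rhs => rw [← Unitization.inl_fst_add_inr_snd_eq E']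
    rw [hEfst]; simp; rfl
  -- cfc identities
  have hmul := cfc_mul (fun t : ℝ => t) h A' continuousOn_id hcont.continuousOn
  rw [cfc_id' (R := ℝ) (a := A') (ha := hA'sa)] at hmul
  have hE'cfc : E' = cfc (fun t => t * h t) A' := by rw [hE', hu, ← hmul]
  have hidh : ContinuousOn (fun t : ℝ => t * h t) (spectrum ℝ A') :=
    continuousOn_id.mul hcont.continuousOn
  have hP : (1 : Unitization ℂ C) - E' = cfc (fun t => 1 - t * h t) A' := by
    have h2 := cfc_sub (fun _ : ℝ => (1:ℝ)) (fun t => t * h t) A' continuousOn_const hidh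
    rw [cfc_const (1:ℝ) A' hA'sa, map_one] at h2
    rw [hE'cfc, ← h2]
  have hbound : ∀ t ∈ spectrum ℝ A', 0 ≤ t * h t ∧ t * h t ≤ 1 := by
    intro t ht
    have ht0 := hσ t ht
    have h1 : max t 0 = t := max_eq_left ht0
    have hs : (0:ℝ) ≤ h t := le_of_lt (by rw [hh]; exact inv_pos.mpr (hpos t))
    have hst : h t * (max t 0 + δ) = 1 := inv_mul_cancel₀ (hpos t).ne'
    exact ⟨mul_nonneg ht0 hs, by nlinarith [hpos t]⟩
  have hPnorm : ‖(1 : Unitization ℂ C) - E'‖ ≤ 1 := by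
    rw [hP]
    refine norm_cfc_le zero_le_one fun t ht => ?_
    obtain ⟨h0, h1⟩ := hbound t ht
    rw [Real.norm_eq_abs, abs_le]; constructor <;> linarith
  have hPsa : IsSelfAdjoint ((1 : Unitization ℂ C) - E') := hP ▸ cfc_predicate _ A'
  have c1 : ContinuousOn (fun t : ℝ => 1 - t * h t) (spectrum ℝ A') :=
    continuousOn_const.sub hidh
  have hPAP : ((1:Unitization ℂ C) - E') * A' * ((1:Unitization ℂ C) - E')
      = cfc (fun t => (1 - t * h t) * t * (1 - t * h t)) A' := by
    rw [hP, cfc_mul (fun t => (1 - t * h t) * t) (fun t => 1 - t * h t) A'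
        (c1.mul continuousOn_id) c1,
      cfc_mul (fun t => 1 - t * h t) (fun t : ℝ => t) A' c1 continuousOn_id,
      cfc_id' (R := ℝ) (a := A') (ha := hA'sa)]
  have hfinal : ‖((1:Unitization ℂ C) - E') * A' * ((1:Unitization ℂ C) - E')‖ ≤ δ / 4 := by
    rw [hPAP]
    refine norm_cfc_le (by positivity) fun t ht => ?_
    have ht0 := hσ t ht
    obtain ⟨h0, h1⟩ := hbound t ht
    have hst : h t * (max t 0 + δ) = 1 := inv_mul_cancel₀ (hpos t).ne'
    have h1' : max t 0 = t := max_eq_left ht0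
    rw [h1'] at hst
    have hs : (0:ℝ) ≤ h t := le_of_lt (by rw [hh]; exact inv_pos.mpr (hpos t))
    have key : 1 - t * h t = δ * h t := by nlinarith [hst]
    rw [Real.norm_eq_abs, abs_le, key]
    constructor
    · nlinarith [mul_nonneg (mul_nonneg (mul_nonneg hδ.le hs) ht0) (mul_nonneg hδ.le hs)]
    · have k2 : (h t * (t + δ)) ^ 2 = 1 := by rw [hst]; norm_num
      nlinarith [sq_nonneg ((t - δ) * h t), k2, hδ, mul_pos hδ hδ]
  refine ⟨e, ⟨u.fst, u.snd, ?_⟩, ?_, ?_⟩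
  · rw [he, hE', Unitization.snd_mul, hA'def]
    simp [Unitization.fst_inr, Unitization.snd_inr, mul_comm]
  · -- ‖m - e * m‖ ≤ ε
    have key : ((m - e * m : C) : Unitization ℂ C)
        = ((1:Unitization ℂ C) - E') * M' := by
      rw [Unitization.inr_sub, Unitization.inr_mul, hEeq, hM'def, sub_mul, one_mul]
    have hnorm : ‖m - e * m‖ = ‖((1:Unitization ℂ C) - E') * M'‖ := by
      rw [← key, Unitization.norm_inr]
    set x : Unitization ℂ C := ((1:Unitization ℂ C) - E') * M' with hx
    have hxx : x * star x = ((1:Unitization ℂ C) - E') * A' * ((1:Unitization ℂ C) - E') := by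
      rw [hx, hMA, star_mul, hPsa.star_eq]; simp [mul_assoc]
    have hn2 : ‖x‖ * ‖x‖ ≤ δ / 4 := by
      rw [← CStarRing.norm_self_mul_star (x := x), hxx]; exact hfinal
    rw [hnorm]
    nlinarith [norm_nonneg x, hε]
  · intro z
    have key : ((z - e * z : C) : Unitization ℂ C)
        = ((1:Unitization ℂ C) - E') * (z : Unitization ℂ C) := by
      rw [Unitization.inr_sub, Unitization.inr_mul, hEeq, sub_mul, one_mul]
    calc ‖z - e * z‖ = ‖((1:Unitization ℂ C) - E') * (z : Unitization ℂ C)‖ := by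
          rw [← key, Unitization.norm_inr]
      _ ≤ ‖(1:Unitization ℂ C) - E'‖ * ‖(z : Unitization ℂ C)‖ := norm_mul_le _ _
      _ ≤ 1 * ‖z‖ := by
          rw [Unitization.norm_inr]
          exact mul_le_mul_of_nonneg_right hPnorm (norm_nonneg z)
      _ = ‖z‖ := one_mul _
  end CStar

section CStar2
variable {C : Type*} [NonUnitalNormedRing C] [StarRing C] [CStarRing C]
  [NormedSpace ℂ C] [CompleteSpace C] [SMulCommClass ℂ C C] [IsScalarTower ℂ C C] [StarModule ℂ C]

/-- Key C*-lemma: an element of `N` close to `M` is close to `M ⊓ N`. -/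
lemma cstar_key {M N : Submodule ℂ C}
    (hM2 : ∀ (x : C) {y : C}, y ∈ M → y * x ∈ M)
    (hN1 : ∀ (x : C) {y : C}, y ∈ N → x * y ∈ N)
    {n m : C} (hn : n ∈ N) (hm : m ∈ M) {ε : ℝ} (hε : 0 < ε) :
    ∃ z, z ∈ M ∧ z ∈ N ∧ ‖n - z‖ ≤ ‖n - m‖ + ε := by
  obtain ⟨e, ⟨r, c, hdec⟩, hem, hcontr⟩ := cstar_approx m hε
  have hmm : m * star m ∈ M := hM2 (star m) hm
  have heM : e ∈ M := by
    rw [hdec]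
    exact M.add_mem (M.smul_mem r hmm) (hM2 c hmm)
  refine ⟨e * n, hM2 n heM, hN1 e hn, ?_⟩
  have hsplit : n - e * n = ((n - m) - e * (n - m)) + (m - e * m) := by
    rw [mul_sub]; abel
  calc ‖n - e * n‖ ≤ ‖(n - m) - e * (n - m)‖ + ‖m - e * m‖ := by
        rw [hsplit]; exact norm_add_le _ _
    _ ≤ ‖n - m‖ + ε := add_le_add (hcontr _) hem

/-- The sum of two closed ideals in a C*-algebra is closed. -/
lemma cstar_sum_closed {M N : Submodule ℂ C}
    (hMc : IsClosed (M : Set C)) (hNc : IsClosed (N : Set C))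
    (hM2 : ∀ (x : C) {y : C}, y ∈ M → y * x ∈ M)
    (hN1 : ∀ (x : C) {y : C}, y ∈ N → x * y ∈ N) :
    IsClosed ((M ⊔ N : Submodule ℂ C) : Set C) := by
  refine isClosed_of_closure_subset fun x hx => ?_
  -- choose approximating sequence
  have hseq : ∀ k : ℕ, ∃ y ∈ (M ⊔ N : Submodule ℂ C), dist x y < (2:ℝ)⁻¹ ^ k := by
    intro k
    exact Metric.mem_closure_iff.mp hx _ (by positivity)
  choose y hy hyd using hseq
  have hmem : ∀ k, ∃ m ∈ M, ∃ n ∈ N, m + n = y k := fun k => Submodule.mem_sup.mp (hy k)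
  choose mm hmm nn hnn hmn using hmem
  -- the differences
  have hdiff : ∀ k, ∃ z, z ∈ M ∧ z ∈ N ∧
      ‖(nn (k+1) - nn k) - z‖ ≤ 3 * (2:ℝ)⁻¹ ^ k := by
    intro k
    have hmMem : mm k - mm (k+1) ∈ M := M.sub_mem (hmm k) (hmm (k+1))
    have hnMem : nn (k+1) - nn k ∈ N := N.sub_mem (hnn (k+1)) (hnn k)
    obtain ⟨z, hzM, hzN, hz⟩ := cstar_key hM2 hN1 hnMem hmMem
      (ε := (2:ℝ)⁻¹ ^ k) (by positivity)
    refine ⟨z, hzM, hzN, hz.trans ?_⟩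
    have hval : (nn (k+1) - nn k) - (mm k - mm (k+1)) = y (k+1) - y k := by
      rw [← hmn (k+1), ← hmn k]; abel
    have : ‖(nn (k+1) - nn k) - (mm k - mm (k+1))‖ ≤ (2:ℝ)⁻¹ ^ (k+1) + (2:ℝ)⁻¹ ^ k := by
      rw [hval]
      calc ‖y (k+1) - y k‖ ≤ ‖y (k+1) - x‖ + ‖x - y k‖ := by
            simpa using norm_sub_le_norm_sub_add_norm_sub (y (k+1)) x (y k)
        _ ≤ (2:ℝ)⁻¹ ^ (k+1) + (2:ℝ)⁻¹ ^ k := by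
            gcongr
            · rw [norm_sub_rev, ← dist_eq_norm]; exact (hyd (k+1)).le
            · rw [← dist_eq_norm]; exact (hyd k).le
    have h2 : (2:ℝ)⁻¹ ^ (k + 1) + (2:ℝ)⁻¹ ^ k + (2:ℝ)⁻¹ ^ k ≤ 3 * (2:ℝ)⁻¹ ^ k := by
      have : (2:ℝ)⁻¹ ^ (k + 1) ≤ (2:ℝ)⁻¹ ^ k :=
        pow_le_pow_of_le_one (by norm_num) (by norm_num) (Nat.le_succ k)
      linarith
    linarith
  choose z hzM hzN hz using hdiff
  -- partial-sum sequence in N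
  set s : ℕ → C := fun k => nn k - (Finset.range k).sum z with hs
  have hsN : ∀ k, s k ∈ N := fun k =>
    N.sub_mem (hnn k) (Submodule.sum_mem N fun i _ => hzN i)
  have hstep : ∀ k, s (k+1) - s k = (nn (k+1) - nn k) - z k := by
    intro k
    rw [hs]
    simp only [Finset.sum_range_succ]
    abel
  have hcauchy : CauchySeq s := by
    refine cauchySeq_of_le_geometric (2:ℝ)⁻¹ 3 (by norm_num) fun k => ?_
    rw [dist_eq_norm, norm_sub_rev, hstep k]
    exact hz k
  obtain ⟨l, hl⟩ := cauchySeq_tendsto_of_complete hcauchy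
  have hlN : l ∈ N := hNc.mem_of_tendsto hl (Filter.Eventually.of_forall hsN)
  -- the complementary sequence lies in M
  have hwM : ∀ k, y k - s k ∈ M := by
    intro k
    have : y k - s k = mm k + (Finset.range k).sum z := by
      rw [hs, ← hmn k]; dsimp only; abel
    rw [this]
    exact M.add_mem (hmm k) (Submodule.sum_mem M fun i _ => hzM i)
  have hyx : Filter.Tendsto y Filter.atTop (nhds x) := by
    rw [tendsto_iff_dist_tendsto_zero]
    refine squeeze_zero (g := fun k => (2:ℝ)⁻¹ ^ k) (fun k => dist_nonneg) (fun k => ?_) ?_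
    · exact (dist_comm (y k) x ▸ (hyd k).le)
    · exact tendsto_pow_atTop_nhds_zero_of_lt_one (by norm_num) (by norm_num)
  have hwlim : Filter.Tendsto (fun k => y k - s k) Filter.atTop (nhds (x - l)) := hyx.sub hl
  have hxlM : x - l ∈ M := hMc.mem_of_tendsto hwlim (Filter.Eventually.of_forall hwM)
  have : x = (x - l) + l := by abel
  rw [this]
  exact Submodule.add_mem _ (Submodule.mem_sup_left hxlM) (Submodule.mem_sup_right hlN)

end CStar2

section Aux
variable {α : G → (A ≃⋆ₐ[ℂ] A)} (E : CrossedProduct.{u} A G α)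

lemma idealCP_isClosed (K : TwoSidedIdeal A) : IsClosed ((idealCP E K : Submodule ℂ E.C) : Set E.C) :=
  Submodule.isClosed_topologicalClosure _

lemma gen_mem_idealCP {K : TwoSidedIdeal A} {a : A} (ha : a ∈ K) (g : G) :
    E.gen a g ∈ idealCP E K :=
  Submodule.le_topologicalClosure _ (Submodule.subset_span ⟨a, ha, g, rfl⟩)

lemma idealCP_mono {K K' : TwoSidedIdeal A} (h : K ≤ K') : idealCP E K ≤ idealCP E K' :=
  Submodule.topologicalClosure_mono <| Submodule.span_mono <| by
    rintro x ⟨a, haK, g, rfl⟩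
    exact ⟨a, h haK, g, rfl⟩

/-- `idealCP E K` absorbs multiplication from `E.C` on both sides. -/
lemma idealCP_absorb {K : TwoSidedIdeal A} (hKinv : ∀ (g : G) (a : A), a ∈ K → α g a ∈ K)
    (x : E.C) {y : E.C} (hy : y ∈ idealCP E K) :
    x * y ∈ idealCP E K ∧ y * x ∈ idealCP E K := by
  set P : Submodule ℂ E.C := idealCP E K with hP
  have hPc : IsClosed (P : Set E.C) := idealCP_isClosed E K
  have comap_closed : ∀ (w : E.C),
      IsClosed ((P.comap (LinearMap.mulLeft ℂ w) ⊓ P.comap (LinearMap.mulRight ℂ w) :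
        Submodule ℂ E.C) : Set E.C) := by
    intro w
    rw [Submodule.coe_inf]
    exact ((hPc.preimage (continuous_mul_left w)).inter (hPc.preimage (continuous_mul_right w)))
  -- Step 1: generators multiply `P` into `P`.
  have step1 : ∀ (a : A) (g : G), ∀ {y : E.C}, y ∈ P →
      E.gen a g * y ∈ P ∧ y * E.gen a g ∈ P := by
    intro a g y hy
    have hle : P ≤ P.comap (LinearMap.mulLeft ℂ (E.gen a g)) ⊓
        P.comap (LinearMap.mulRight ℂ (E.gen a g)) := by
      refine Submodule.topologicalClosure_minimal _ ?_ (comap_closed _)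
      rw [Submodule.span_le]
      rintro z ⟨b, hb, h, rfl⟩
      refine ⟨?_, ?_⟩
      · show E.gen a g * E.gen b h ∈ P
        rw [E.gen_mul]
        exact gen_mem_idealCP E (K.mul_mem_left a _ (hKinv g b hb)) _
      · show E.gen b h * E.gen a g ∈ P
        rw [E.gen_mul]
        exact gen_mem_idealCP E (K.mul_mem_right b _ hb) _
    exact hle hy
  -- Step 2: everything multiplies `P` into `P`.
  have hle2 : (⊤ : Submodule ℂ E.C) ≤ P.comap (LinearMap.mulRight ℂ y) ⊓
      P.comap (LinearMap.mulLeft ℂ y) := by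
    rw [← E.spanning]
    refine Submodule.topologicalClosure_minimal _ ?_ ?_
    · rw [Submodule.span_le]
      rintro z ⟨⟨a, g⟩, rfl⟩
      obtain ⟨h1, h2⟩ := step1 a g hy
      exact ⟨h1, h2⟩
    · rw [Submodule.coe_inf]
      exact ((hPc.preimage (continuous_mul_right y)).inter (hPc.preimage (continuous_mul_left y)))
  obtain ⟨h1, h2⟩ := hle2 (Submodule.mem_top : x ∈ ⊤)
  exact ⟨h1, h2⟩

/-- Products from `idealCP E I` and `idealCP E J` land in `idealCP E (I ⊓ J)`. -/
lemma idealCP_mul_inf {I J : TwoSidedIdeal A}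
    (hJinv : ∀ (g : G) (a : A), a ∈ J → α g a ∈ J)
    {p q : E.C} (hp : p ∈ idealCP E I) (hq : q ∈ idealCP E J) :
    p * q ∈ idealCP E (I ⊓ J) := by
  set R : Submodule ℂ E.C := idealCP E (I ⊓ J) with hR
  have hRc : IsClosed (R : Set E.C) := idealCP_isClosed E _
  -- Step A: for a generator of `J`, multiplication maps `idealCP E I` into `R`.
  have stepA : ∀ (b : A), b ∈ J → ∀ (h : G), ∀ {p : E.C}, p ∈ idealCP E I →
      p * E.gen b h ∈ R := by
    intro b hb h p hp
    have hle : idealCP E I ≤ R.comap (LinearMap.mulRight ℂ (E.gen b h)) := by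
      refine Submodule.topologicalClosure_minimal _ ?_ (hRc.preimage (continuous_mul_right _))
      rw [Submodule.span_le]
      rintro z ⟨a, ha, g, rfl⟩
      show E.gen a g * E.gen b h ∈ R
      rw [E.gen_mul]
      refine gen_mem_idealCP E ?_ _
      rw [TwoSidedIdeal.mem_inf]
      exact ⟨I.mul_mem_right _ _ ha, J.mul_mem_left _ _ (hJinv g b hb)⟩
    exact hle hp
  -- Step B: multiplication by `p` maps `idealCP E J` into `R`.
  have hle : idealCP E J ≤ R.comap (LinearMap.mulLeft ℂ p) := by
    refine Submodule.topologicalClosure_minimal _ ?_ (hRc.preimage (continuous_mul_left _))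
    rw [Submodule.span_le]
    rintro z ⟨b, hb, h, rfl⟩
    exact stepA b hb h hp
  exact hle hq

end Aux

/-- for α-invariant closed two-sided ideals `I, J` of `A`,
`(I ⋊_α G) + (J ⋊_α G) = (I + J) ⋊_α G` and
`(I ⋊_α G) ∩ (J ⋊_α G) = (I ∩ J) ⋊_α G`. -/
theorem stmt10 (α : G → (A ≃⋆ₐ[ℂ] A))
    (hα1 : ∀ a : A, α 1 a = a)
    (hαmul : ∀ (g h : G) (a : A), α (g * h) a = α g (α h a))
    (E : CrossedProduct.{u} A G α)
    (I J : TwoSidedIdeal A)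
    (hIclosed : IsClosed (I : Set A)) (hJclosed : IsClosed (J : Set A))
    (hIinv : ∀ (g : G) (a : A), a ∈ I → α g a ∈ I)
    (hJinv : ∀ (g : G) (a : A), a ∈ J → α g a ∈ J) :
    idealCP E I ⊔ idealCP E J = idealCP E (I ⊔ J) ∧
    idealCP E I ⊓ idealCP E J = idealCP E (I ⊓ J) := by
  constructor
  · -- sup
    apply le_antisymm
    · exact sup_le (idealCP_mono E le_sup_left) (idealCP_mono E le_sup_right)
    · refine Submodule.topologicalClosure_minimal _ ?_ ?_
      · rw [Submodule.span_le]
        rintro x ⟨a, ha, g, rfl⟩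
        show E.gen a g ∈ idealCP E I ⊔ idealCP E J
        obtain ⟨i, hi, j, hj, hij⟩ := TwoSidedIdeal.mem_sup.mp ha
        have hgen : E.gen a g = E.gen i g + E.gen j g := by rw [← hij, E.gen_add]
        rw [hgen]
        exact Submodule.add_mem _ (Submodule.mem_sup_left (gen_mem_idealCP E hi g))
          (Submodule.mem_sup_right (gen_mem_idealCP E hj g))
      · exact cstar_sum_closed (idealCP_isClosed E I) (idealCP_isClosed E J)
          (fun x {y} hy => (idealCP_absorb E hIinv x hy).2)
          (fun x {y} hy => (idealCP_absorb E hJinv x hy).1)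
  · -- inf
    apply le_antisymm
    · intro x hx
      obtain ⟨hxI, hxJ⟩ := Submodule.mem_inf.mp hx
      have hRc : IsClosed ((idealCP E (I ⊓ J) : Submodule ℂ E.C) : Set E.C) :=
        idealCP_isClosed E _
      have hxc : x ∈ closure ((idealCP E (I ⊓ J) : Submodule ℂ E.C) : Set E.C) := by
        rw [Metric.mem_closure_iff]
        intro ε hε
        obtain ⟨e, ⟨r, c, hdecx⟩, hem, _⟩ := cstar_approx (C := E.C) x (half_pos hε)
        have hxx : x * star x ∈ idealCP E I := (idealCP_absorb E hIinv (star x) hxI).2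
        have heI : e ∈ idealCP E I := by
          rw [hdecx]
          exact Submodule.add_mem _ (Submodule.smul_mem _ r hxx)
            ((idealCP_absorb E hIinv c hxx).2)
        refine ⟨e * x, idealCP_mul_inf E hJinv heI hxJ, ?_⟩
        rw [dist_eq_norm]
        calc ‖x - e * x‖ ≤ ε / 2 := hem
          _ < ε := half_lt_self hε
      rwa [hRc.closure_eq] at hxc
    · exact le_inf (idealCP_mono E inf_le_left) (idealCP_mono E inf_le_right)
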